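/- arXiv:2508.04155 — 2 statements merged into one kernel-verified Lean document; each statement's English description precedes it below -/
import Mathlib

section
/- Combined distance lower bound for the ProdSig metric (Equations 5–7 made precise): Fix θ ∈ EuclideanSpace ℝ (Fin m) and k₀. Suppose (Assumption 1) x ↦ -log(f(x,θ)^{(k₀)}) is Lipschitz with constant C_L > 0 on EuclideanSpace ℝ (Fin n); suppose that for x ∈ {x₀, x*} the map ϑ ↦ log(f(x,ϑ)^{(k₀)}) is differentiable with gradient -g(x,ϑ) continuous along the segment from 0 to θ; suppose (Assumption 2) ‖g(x, t•θ) - g(x,θ)‖ ≤ ξ for all t ∈ [0,1] and x ∈ {x₀, x*}; suppose log(f(x₀,0)^{(k₀)}) = log(f(x*,0)^{(k₀)}); and suppose (threat model) g(x*,θ)^{(i)} = g(x₀,θ)^{(i)} for every index i ∉ M, where M ⊆ Fin m. Then C_L · ‖x* - x₀‖ ≥ | Σ_{i ∈ M} ( g(x*,θ)^{(i)} - g(x₀,θ)^{(i)} ) θ^{(i)} | - 2 ξ ‖θ‖. -/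
open NNReal RealInnerProductSpace

/-- Combined distance lower bound for the ProdSig metric (Equations 5–7 made precise).
`f x ϑ` plays the role of `f(x,ϑ)^{(k₀)} > 0`; `g x ϑ = -∇_ϑ log(f(x,ϑ)^{(k₀)})` is the
cross-entropy gradient; Assumption 1 is Lipschitzness of `x ↦ -log(f(x,θ)^{(k₀)})`;
Assumption 2 bounds the gradient variation along the segment from `0` to `θ`; the threat
model forces agreement of `g(x*,θ)` and `g(x₀,θ)` outside the masked set `M`. -/
theorem prodsig_combined_bound {n m : ℕ}
    (f : EuclideanSpace ℝ (Fin n) → EuclideanSpace ℝ (Fin m) → ℝ)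
    (hfpos : ∀ x ϑ, 0 < f x ϑ)
    (θ : EuclideanSpace ℝ (Fin m))
    (g : EuclideanSpace ℝ (Fin n) → EuclideanSpace ℝ (Fin m) → EuclideanSpace ℝ (Fin m))
    (hg : ∀ x ϑ, g x ϑ = -gradient (fun ϑ' => Real.log (f x ϑ')) ϑ)
    (CL : ℝ≥0) (hCL : 0 < CL)
    (hLip : LipschitzWith CL (fun x => -Real.log (f x θ)))
    (x₀ xstar : EuclideanSpace ℝ (Fin n))
    (hdiff : ∀ x ∈ ({x₀, xstar} : Set (EuclideanSpace ℝ (Fin n))),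
      Differentiable ℝ (fun ϑ => Real.log (f x ϑ)) ∧
      ContinuousOn (gradient fun ϑ => Real.log (f x ϑ)) (segment ℝ 0 θ))
    (ξ : ℝ) (hξ : 0 < ξ)
    (hsmooth : ∀ x ∈ ({x₀, xstar} : Set (EuclideanSpace ℝ (Fin n))),
      ∀ t ∈ Set.Icc (0:ℝ) 1, ‖g x (t • θ) - g x θ‖ ≤ ξ)
    (hzero : Real.log (f x₀ 0) = Real.log (f xstar 0))
    (M : Finset (Fin m))
    (hagree : ∀ i ∉ M, g xstar θ i = g x₀ θ i) :
    (CL : ℝ) * ‖xstar - x₀‖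
      ≥ |∑ i ∈ M, (g xstar θ i - g x₀ θ i) * θ i| - 2 * ξ * ‖θ‖ := by
  classical
  have hx₀mem : x₀ ∈ ({x₀, xstar} : Set (EuclideanSpace ℝ (Fin n))) := by simp
  have hxsmem : xstar ∈ ({x₀, xstar} : Set (EuclideanSpace ℝ (Fin n))) := by simp
  have hds : Differentiable ℝ (fun ϑ => Real.log (f xstar ϑ)) := (hdiff xstar hxsmem).1
  have hd0 : Differentiable ℝ (fun ϑ => Real.log (f x₀ ϑ)) := (hdiff x₀ hx₀mem).1
  set S : ℝ := ⟪g xstar θ - g x₀ θ, θ⟫ with hS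
  set χ : ℝ → ℝ := fun t =>
    Real.log (f xstar (t • θ)) - Real.log (f x₀ (t • θ)) + t * S with hχ
  -- derivative of χ
  have hderiv : ∀ t : ℝ, HasDerivAt χ
      (⟪gradient (fun ϑ' => Real.log (f xstar ϑ')) (t • θ), θ⟫
        - ⟪gradient (fun ϑ' => Real.log (f x₀ ϑ')) (t • θ), θ⟫ + S) t := by
    intro t
    have hline : HasDerivAt (fun s : ℝ => s • θ) θ t := by
      simpa using (hasDerivAt_id t).smul_const θ
    have h1 : HasDerivAt (fun s : ℝ => Real.log (f xstar (s • θ)))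
        (⟪gradient (fun ϑ' => Real.log (f xstar ϑ')) (t • θ), θ⟫) t := by
      have := ((hds (t • θ)).hasGradientAt.hasFDerivAt).comp_hasDerivAt t hline
      simpa [Function.comp_def] using this
    have h2 : HasDerivAt (fun s : ℝ => Real.log (f x₀ (s • θ)))
        (⟪gradient (fun ϑ' => Real.log (f x₀ ϑ')) (t • θ), θ⟫) t := by
      have := ((hd0 (t • θ)).hasGradientAt.hasFDerivAt).comp_hasDerivAt t hline
      simpa [Function.comp_def] using this
    have h3 : HasDerivAt (fun s : ℝ => s * S) S t := by
      simpa using (hasDerivAt_id t).mul_const S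
    exact (h1.sub h2).add h3
  -- bound on the derivative
  have hbound : ∀ t ∈ Set.Icc (0:ℝ) 1,
      ‖⟪gradient (fun ϑ' => Real.log (f xstar ϑ')) (t • θ), θ⟫
        - ⟪gradient (fun ϑ' => Real.log (f x₀ ϑ')) (t • θ), θ⟫ + S‖ ≤ 2 * ξ * ‖θ‖ := by
    intro t ht
    have key : ⟪gradient (fun ϑ' => Real.log (f xstar ϑ')) (t • θ), θ⟫
        - ⟪gradient (fun ϑ' => Real.log (f x₀ ϑ')) (t • θ), θ⟫ + S
        = ⟪(g xstar θ - g xstar (t • θ)) - (g x₀ θ - g x₀ (t • θ)), θ⟫ := by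
      have e1 : gradient (fun ϑ' => Real.log (f xstar ϑ')) (t • θ) = -(g xstar (t • θ)) := by
        rw [hg]; simp
      have e2 : gradient (fun ϑ' => Real.log (f x₀ ϑ')) (t • θ) = -(g x₀ (t • θ)) := by
        rw [hg]; simp
      rw [e1, e2, hS]
      simp only [inner_neg_left, inner_sub_left]
      ring
    rw [key]
    have hcs := abs_real_inner_le_norm
      ((g xstar θ - g xstar (t • θ)) - (g x₀ θ - g x₀ (t • θ))) θ
    have h1 : ‖g xstar θ - g xstar (t • θ)‖ ≤ ξ := by
      rw [norm_sub_rev]; exact hsmooth xstar hxsmem t ht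
    have h2 : ‖g x₀ θ - g x₀ (t • θ)‖ ≤ ξ := by
      rw [norm_sub_rev]; exact hsmooth x₀ hx₀mem t ht
    have htri : ‖(g xstar θ - g xstar (t • θ)) - (g x₀ θ - g x₀ (t • θ))‖ ≤ ξ + ξ :=
      le_trans (norm_sub_le _ _) (add_le_add h1 h2)
    calc ‖⟪(g xstar θ - g xstar (t • θ)) - (g x₀ θ - g x₀ (t • θ)), θ⟫‖
        ≤ ‖(g xstar θ - g xstar (t • θ)) - (g x₀ θ - g x₀ (t • θ))‖ * ‖θ‖ := hcs
      _ ≤ (ξ + ξ) * ‖θ‖ := by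
          apply mul_le_mul_of_nonneg_right htri (norm_nonneg _)
      _ = 2 * ξ * ‖θ‖ := by ring
  -- MVT bound
  have hMVT : ‖χ 1 - χ 0‖ ≤ 2 * ξ * ‖θ‖ := by
    apply norm_image_sub_le_of_norm_deriv_le_segment_01'
      (f' := fun t => ⟪gradient (fun ϑ' => Real.log (f xstar ϑ')) (t • θ), θ⟫
        - ⟪gradient (fun ϑ' => Real.log (f x₀ ϑ')) (t • θ), θ⟫ + S)
    · intro t ht
      exact (hderiv t).hasDerivWithinAt
    · intro t ht
      exact hbound t (Set.mem_Icc_of_Ico ht)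
  have hχ1 : χ 1 = Real.log (f xstar θ) - Real.log (f x₀ θ) + S := by
    simp [hχ]
  have hχ0 : χ 0 = 0 := by
    simp [hχ, hzero]
  have hkey : |Real.log (f xstar θ) - Real.log (f x₀ θ) + S| ≤ 2 * ξ * ‖θ‖ := by
    rw [hχ1, hχ0, sub_zero] at hMVT
    simpa using hMVT
  -- Lipschitz bound
  have hL : |Real.log (f xstar θ) - Real.log (f x₀ θ)| ≤ (CL : ℝ) * ‖xstar - x₀‖ := by
    have := hLip.dist_le_mul xstar x₀
    rw [Real.dist_eq, dist_eq_norm] at this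
    calc |Real.log (f xstar θ) - Real.log (f x₀ θ)|
        = |(-Real.log (f xstar θ)) - (-Real.log (f x₀ θ))| := by rw [abs_sub_comm]; ring_nf
      _ ≤ (CL : ℝ) * ‖xstar - x₀‖ := this
  have hSbound : |S| ≤ 2 * ξ * ‖θ‖ + (CL : ℝ) * ‖xstar - x₀‖ := by
    calc |S| = |(Real.log (f xstar θ) - Real.log (f x₀ θ) + S)
        - (Real.log (f xstar θ) - Real.log (f x₀ θ))| := by ring_nf
      _ ≤ |Real.log (f xstar θ) - Real.log (f x₀ θ) + S|
          + |Real.log (f xstar θ) - Real.log (f x₀ θ)| := abs_sub _ _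
      _ ≤ 2 * ξ * ‖θ‖ + (CL : ℝ) * ‖xstar - x₀‖ := add_le_add hkey hL
  -- identify the sum with S
  have hsum : ∑ i ∈ M, (g xstar θ i - g x₀ θ i) * θ i = S := by
    rw [hS, PiLp.inner_apply]
    rw [← Finset.sum_subset (Finset.subset_univ M)]
    · apply Finset.sum_congr rfl
      intro i _
      simp [PiLp.sub_apply]; ring
    · intro i _ hi
      simp [hagree i hi]
  rw [hsum]
  linarith [abs_nonneg S, hSbound]
end

section
/- Combined distance lower bound for the Grad metric: Fix θ ∈ EuclideanSpace ℝ (Fin m). Suppose (Assumption 3) x ↦ g(x,θ) is Lipschitz with constant C_g > 0 from EuclideanSpace ℝ (Fin n) to EuclideanSpace ℝ (Fin m). Suppose (threat model) the attacker's gradient g* ∈ ℝ^m satisfies g*^{(i)} = g(x₀,θ)^{(i)} for all i ∉ M and |g*^{(i)}| ≤ ξ for all i ∈ M, where M ⊆ Fin m is finite, and that g* = g(x*,θ) for the reconstructed input x*. Then C_g · ‖x* - x₀‖ ≥ ( Σ_{i ∈ M} (g(x₀,θ)^{(i)})² )^{1/2} - ξ · (card M)^{1/2}. -/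
open NNReal

/-- Combined distance lower bound for the Grad metric. `g` plays the role of
`x ↦ g(x,θ)` (the parameter-gradient of the loss as a function of the input), assumed
Lipschitz with constant `C_g > 0` (Assumption 3); the attacker's gradient `gs` agrees
with the ground truth outside the masked set `M`, is bounded by `ξ` on `M`, and is
reproduced exactly by the reconstructed input `x*`. -/
theorem grad_combined_bound {n m : ℕ}
    (g : EuclideanSpace ℝ (Fin n) → EuclideanSpace ℝ (Fin m))
    (Cg : ℝ≥0) (hCg : 0 < Cg)
    (hLip : LipschitzWith Cg g)
    (x₀ xstar : EuclideanSpace ℝ (Fin n))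
    (gs : EuclideanSpace ℝ (Fin m)) (M : Finset (Fin m)) (ξ : ℝ) (hξ : 0 < ξ)
    (hagree : ∀ i ∉ M, gs i = g x₀ i)
    (hbound : ∀ i ∈ M, |gs i| ≤ ξ)
    (hrec : gs = g xstar) :
    (Cg : ℝ) * ‖xstar - x₀‖
      ≥ Real.sqrt (∑ i ∈ M, (g x₀ i) ^ 2) - ξ * Real.sqrt (M.card : ℝ) := by
  -- Step 1: √(∑_M gs²) ≤ ξ √|M|
  have h1 : Real.sqrt (∑ i ∈ M, (gs i) ^ 2) ≤ ξ * Real.sqrt (M.card : ℝ) := by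
    have hsum : (∑ i ∈ M, (gs i) ^ 2) ≤ ∑ i ∈ M, ξ ^ 2 := by
      apply Finset.sum_le_sum
      intro i hi
      have := hbound i hi
      calc (gs i) ^ 2 = |gs i| ^ 2 := (sq_abs _).symm
        _ ≤ ξ ^ 2 := by nlinarith [abs_nonneg (gs i)]
    calc Real.sqrt (∑ i ∈ M, (gs i) ^ 2) ≤ Real.sqrt (∑ i ∈ M, ξ ^ 2) :=
          Real.sqrt_le_sqrt hsum
      _ = ξ * Real.sqrt (M.card : ℝ) := by
          rw [Finset.sum_const, nsmul_eq_mul, mul_comm, Real.sqrt_mul (by positivity),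
            Real.sqrt_sq hξ.le]
  -- Step 2: √(∑_M (gs - g x₀)²) ≤ ‖g xstar - g x₀‖ ≤ Cg ‖xstar - x₀‖
  have h2 : Real.sqrt (∑ i ∈ M, (gs i - g x₀ i) ^ 2) ≤ (Cg : ℝ) * ‖xstar - x₀‖ := by
    have hnorm : ‖g xstar - g x₀‖ = Real.sqrt (∑ i : Fin m, (gs i - g x₀ i) ^ 2) := by
      rw [EuclideanSpace.norm_eq]
      congr 1
      apply Finset.sum_congr rfl
      intro i _
      rw [hrec]
      simp [sq_abs]
    have hle : (∑ i ∈ M, (gs i - g x₀ i) ^ 2) ≤ ∑ i : Fin m, (gs i - g x₀ i) ^ 2 :=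
      Finset.sum_le_sum_of_subset_of_nonneg (Finset.subset_univ M)
        (fun i _ _ => sq_nonneg _)
    have hlip : ‖g xstar - g x₀‖ ≤ (Cg : ℝ) * ‖xstar - x₀‖ := by
      have := hLip.dist_le_mul xstar x₀
      rwa [dist_eq_norm, dist_eq_norm] at this
    calc Real.sqrt (∑ i ∈ M, (gs i - g x₀ i) ^ 2)
        ≤ Real.sqrt (∑ i : Fin m, (gs i - g x₀ i) ^ 2) := Real.sqrt_le_sqrt hle
      _ = ‖g xstar - g x₀‖ := hnorm.symm
      _ ≤ (Cg : ℝ) * ‖xstar - x₀‖ := hlip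
  -- Step 3: triangle inequality √(∑_M (g x₀)²) ≤ √(∑_M gs²) + √(∑_M (gs - g x₀)²)
  have h3 : Real.sqrt (∑ i ∈ M, (g x₀ i) ^ 2)
      ≤ Real.sqrt (∑ i ∈ M, (gs i) ^ 2) + Real.sqrt (∑ i ∈ M, (gs i - g x₀ i) ^ 2) := by
    let u : EuclideanSpace ℝ M := WithLp.toLp 2 (fun i : M => gs i)
    let v : EuclideanSpace ℝ M := WithLp.toLp 2 (fun i : M => gs i - g x₀ i)
    have hnu : ‖u‖ = Real.sqrt (∑ i ∈ M, (gs i) ^ 2) := by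
      rw [EuclideanSpace.norm_eq, ← Finset.sum_coe_sort M (fun i => (gs i)^2)]
      simp [u, sq_abs]
    have hnv : ‖v‖ = Real.sqrt (∑ i ∈ M, (gs i - g x₀ i) ^ 2) := by
      rw [EuclideanSpace.norm_eq, ← Finset.sum_coe_sort M (fun i => (gs i - g x₀ i)^2)]
      simp [v, sq_abs]
    have huv : ‖u - v‖ = Real.sqrt (∑ i ∈ M, (g x₀ i) ^ 2) := by
      rw [EuclideanSpace.norm_eq, ← Finset.sum_coe_sort M (fun i => (g x₀ i)^2)]
      congr 1
      apply Finset.sum_congr rfl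
      intro i _
      simp [u, v, sq_abs]
    calc Real.sqrt (∑ i ∈ M, (g x₀ i) ^ 2) = ‖u - v‖ := huv.symm
      _ ≤ ‖u‖ + ‖v‖ := norm_sub_le u v
      _ = _ := by rw [hnu, hnv]
  linarith
end
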